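/- Let E ⊆ E₀ ⊆ ℂ be fields with E₀/E finite, G a group, and V₀ a finite-dimensional absolutely irreducible representation of G over E₀. Assume that for any two distinct E-algebra embeddings σ, τ: E₀ → ℂ the σ-conjugate ℂ ⊗_{σ,E₀} V₀ and the τ-conjugate ℂ ⊗_{τ,E₀} V₀ are non-isomorphic as representations of G over ℂ. Then the restriction of scalars res_{E₀/E} V₀ is an irreducible representation of G over E. -/

import Mathlib

open scoped TensorProduct

/-- A representation is irreducible if the space is nonzero and the only invariant
subspaces are `⊥` and `⊤`. -/
def IsIrredRep {k G V : Type*} [CommSemiring k] [Monoid G] [AddCommMonoid V] [Module k V]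
    (ρ : Representation k G V) : Prop :=
  Nontrivial V ∧ ∀ W : Submodule k V, (∀ g : G, ∀ v ∈ W, ρ g v ∈ W) → W = ⊥ ∨ W = ⊤

/-- Base change of a representation along a commutative-ring extension `E → F`. -/
noncomputable def repBaseChange {E G V : Type*} [CommSemiring E] [Monoid G]
    [AddCommMonoid V] [Module E V] (F : Type*) [CommSemiring F] [Algebra E F]
    (ρ : Representation E G V) : Representation F G (F ⊗[E] V) :=
  (Module.End.baseChangeHom E F V).toRingHom.toMonoidHom.comp ρ

/-- Restriction of scalars of a representation along a field extension `E ⊆ E₀`. -/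
noncomputable def resRep (E : Type*) {E₀ G V : Type*} [Field E] [Field E₀] [Algebra E E₀]
    [Monoid G] [AddCommGroup V] [Module E₀ V] [Module E V] [IsScalarTower E E₀ V]
    (ρ : Representation E₀ G V) : Representation E G V where
  toFun g := (ρ g).restrictScalars E
  map_one' := by ext v; simp
  map_mul' g h := by ext v; simp

/-- `ρW` (a complex representation of `G` on `W`) realizes the conjugate
`ℂ ⊗_{σ,k} V` of a representation `ρ` of `G` on a finite-dimensional `k`-vector space
`V` along a field embedding `σ : k → ℂ`: there is a `σ`-semilinear `G`-equivariant map
`V → W` whose image spans `W` over `ℂ`, with `dim_ℂ W = dim_k V`. -/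
def IsConjugateRep {k G V W : Type*} [Field k] [Monoid G]
    [AddCommGroup V] [Module k V] [AddCommGroup W] [Module ℂ W]
    (σ : k →+* ℂ) (ρ : Representation k G V) (ρW : Representation ℂ G W) : Prop :=
  ∃ j : V →ₛₗ[σ] W,
    (∀ (g : G) (v : V), j (ρ g v) = ρW g (j v)) ∧
    Submodule.span ℂ (Set.range j) = ⊤ ∧
    Module.finrank ℂ W = Module.finrank k V


section AuxiliaryLemmas

lemma repBaseChange_tmul {E G V : Type*} [CommSemiring E] [Monoid G]
    [AddCommMonoid V] [Module E V] (F : Type*) [CommSemiring F] [Algebra E F]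
    (ρ : Representation E G V) (g : G) (c : F) (v : V) :
    repBaseChange F ρ g (c ⊗ₜ[E] v) = c ⊗ₜ[E] (ρ g v) := rfl

/-- Transport a representation along an additive equivalence that is semilinear with
respect to a ring equivalence. -/
noncomputable def transportRep {C X Y G : Type*} [Field C] [Monoid G] [AddCommGroup X]
    [Module C X] [AddCommGroup Y] [Module ℂ Y] (ε : C ≃+* ℂ) (φ : X ≃+ Y)
    (hφ : ∀ (c : C) (x : X), φ (c • x) = ε c • φ x)
    (ρ : Representation C G X) : Representation ℂ G Y where
  toFun g :=
    { toFun := fun y => φ (ρ g (φ.symm y))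
      map_add' := by intro a b; simp
      map_smul' := by
        intro c y
        have h1 : φ.symm (c • y) = ε.symm c • φ.symm y := by
          apply φ.injective
          rw [hφ]
          simp
        simp only [h1, map_smul, RingHom.id_apply]
        rw [hφ]
        simp }
  map_one' := by ext y; simp
  map_mul' g h := by ext y; simp

lemma transportRep_apply {C X Y G : Type*} [Field C] [Monoid G] [AddCommGroup X]
    [Module C X] [AddCommGroup Y] [Module ℂ Y] (ε : C ≃+* ℂ) (φ : X ≃+ Y)
    (hφ : ∀ (c : C) (x : X), φ (c • x) = ε c • φ x)
    (ρ : Representation C G X) (g : G) (x : X) :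
    transportRep ε φ hφ ρ g (φ x) = φ (ρ g x) := by
  simp [transportRep]

lemma IsIrredRep.transport {C X Y G : Type*} [Field C] [Monoid G] [AddCommGroup X]
    [Module C X] [AddCommGroup Y] [Module ℂ Y] (ε : C ≃+* ℂ) (φ : X ≃+ Y)
    (hφ : ∀ (c : C) (x : X), φ (c • x) = ε c • φ x)
    (ρ : Representation C G X) (hρ : IsIrredRep ρ) :
    IsIrredRep (transportRep ε φ hφ ρ) := by
  obtain ⟨hnt, hsub⟩ := hρ
  constructor
  · obtain ⟨x, y, hxy⟩ := hnt
    exact ⟨φ x, φ y, fun h => hxy (φ.injective h)⟩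
  · intro Z hZ
    let Z' : Submodule C X :=
      { carrier := φ ⁻¹' Z
        add_mem' := fun {a b} ha hb => by
          simp only [Set.mem_preimage, map_add] at *
          exact Z.add_mem ha hb
        zero_mem' := by simp
        smul_mem' := fun c x hx => by
          simp only [Set.mem_preimage] at *
          rw [hφ]
          exact Z.smul_mem _ hx }
    have hmem : ∀ x : X, x ∈ Z' ↔ φ x ∈ Z := fun x => Iff.rfl
    have hZ'inv : ∀ g : G, ∀ x ∈ Z', ρ g x ∈ Z' := by
      intro g x hx
      rw [hmem] at hx ⊢
      have := hZ g (φ x) hx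
      rwa [transportRep_apply] at this
    rcases hsub Z' hZ'inv with h | h
    · left
      rw [eq_bot_iff]
      intro y hy
      have : φ.symm y ∈ Z' := by rw [hmem]; simpa using hy
      rw [h] at this
      have : φ.symm y = 0 := this
      simpa using congrArg φ this
    · right
      rw [eq_top_iff]
      intro y _
      have : φ.symm y ∈ Z' := h ▸ Submodule.mem_top
      rw [hmem] at this
      simpa using this

/-- The canonical conjugate model on `Fin m → ℂ`. -/
lemma conjModel {k C G V : Type*} [Field k] [Field C] [Algebra k C] [Monoid G]
    [AddCommGroup V] [Module k V] [FiniteDimensional k V]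
    (ε : C ≃+* ℂ) (ρ : Representation k G V)
    (hirr : IsIrredRep (repBaseChange C ρ)) :
    ∃ ρX : Representation ℂ G (Fin (Module.finrank k V) → ℂ),
      ∃ j : V →ₛₗ[(ε : C →+* ℂ).comp (algebraMap k C)] (Fin (Module.finrank k V) → ℂ),
        Function.Injective j ∧ (∀ (g : G) (v : V), j (ρ g v) = ρX g (j v)) ∧
        Submodule.span ℂ (Set.range j) = ⊤ ∧ IsIrredRep ρX := by
  classical
  set m := Module.finrank k V with hm
  let b0 : Module.Basis (Fin m) k V := Module.finBasis k V
  let b : Module.Basis (Fin m) C (C ⊗[k] V) := b0.baseChange C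
  let φ0 : (C ⊗[k] V) ≃ₗ[C] (Fin m → C) := b.equivFun
  let φ : (C ⊗[k] V) ≃+ (Fin m → ℂ) :=
    φ0.toAddEquiv.trans (AddEquiv.piCongrRight fun _ => ε.toAddEquiv)
  have hφapp : ∀ (x : C ⊗[k] V) (i : Fin m), φ x i = ε (φ0 x i) := fun x i => rfl
  have hφ : ∀ (c : C) (x : C ⊗[k] V), φ (c • x) = ε c • φ x := by
    intro c x
    funext i
    simp only [hφapp, map_smul, Pi.smul_apply, smul_eq_mul, map_mul]
  refine ⟨transportRep ε φ hφ (repBaseChange C ρ), ?_⟩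
  refine ⟨{ toFun := fun v => φ ((1 : C) ⊗ₜ[k] v)
            map_add' := by
              intro v w
              show φ ((1 : C) ⊗ₜ[k] (v + w)) = φ ((1 : C) ⊗ₜ[k] v) + φ ((1 : C) ⊗ₜ[k] w)
              rw [TensorProduct.tmul_add, map_add]
            map_smul' := by
              intro c v
              show φ ((1 : C) ⊗ₜ[k] (c • v)) = ((ε : C →+* ℂ).comp (algebraMap k C)) c • φ ((1 : C) ⊗ₜ[k] v)
              have h1 : (1 : C) ⊗ₜ[k] (c • v) = (algebraMap k C c) • ((1 : C) ⊗ₜ[k] v) := by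
                rw [TensorProduct.tmul_smul, algebraMap_smul]
              rw [h1, hφ]
              rfl }, ?_, ?_, ?_, ?_⟩
  · -- injective
    intro v w h
    have h' : (1 : C) ⊗ₜ[k] v = (1 : C) ⊗ₜ[k] w := φ.injective h
    have h2 : b0.repr v = b0.repr w := by
      ext i
      have h3 := congrArg (fun x => b.repr x i) h'
      simp only [b, Module.Basis.baseChange_repr_tmul, smul_eq_mul, mul_one] at h3
      have h4 : algebraMap k C (b0.repr v i) = algebraMap k C (b0.repr w i) := by
        simpa [Algebra.smul_def] using h3
      exact (algebraMap k C).injective h4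
    calc v = b0.repr.symm (b0.repr v) := (b0.repr.symm_apply_apply v).symm
      _ = b0.repr.symm (b0.repr w) := by rw [h2]
      _ = w := b0.repr.symm_apply_apply w
  · -- equivariance
    intro g v
    show φ ((1 : C) ⊗ₜ[k] (ρ g v)) = transportRep ε φ hφ (repBaseChange C ρ) g (φ (1 ⊗ₜ[k] v))
    rw [transportRep_apply, repBaseChange_tmul]
  · -- span
    have hspan0 : ∀ x : C ⊗[k] V,
        x ∈ Submodule.span C (Set.range fun v : V => (1 : C) ⊗ₜ[k] v) := by
      intro x
      induction x using TensorProduct.induction_on with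
      | zero => exact Submodule.zero_mem _
      | tmul z v =>
          have hz : z ⊗ₜ[k] v = z • ((1 : C) ⊗ₜ[k] v) := by
            rw [TensorProduct.smul_tmul', smul_eq_mul, mul_one]
          rw [hz]
          exact Submodule.smul_mem _ _ (Submodule.subset_span ⟨v, rfl⟩)
      | add x y hx hy => exact Submodule.add_mem _ hx hy
    rw [eq_top_iff]
    rintro y -
    have hx := hspan0 (φ.symm y)
    have hpush : ∀ x ∈ Submodule.span C (Set.range fun v : V => (1 : C) ⊗ₜ[k] v),
        φ x ∈ Submodule.span ℂ
          (Set.range fun v : V => φ ((1 : C) ⊗ₜ[k] v)) := by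
      intro x hx
      induction hx using Submodule.span_induction with
      | mem x hxmem =>
          obtain ⟨v, rfl⟩ := hxmem
          exact Submodule.subset_span ⟨v, rfl⟩
      | zero => simpa using Submodule.zero_mem _
      | add a b _ _ ha hb => rw [map_add]; exact Submodule.add_mem _ ha hb
      | smul c x _ hx => rw [hφ]; exact Submodule.smul_mem _ _ hx
    have := hpush _ hx
    simpa using this
  · exact IsIrredRep.transport ε φ hφ (repBaseChange C ρ) hirr

/-- Schur: a nonzero equivariant map between irreducible representations is bijective. -/
lemma schur_iso {F G X Y : Type*} [Field F] [Monoid G] [AddCommGroup X] [Module F X]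
    [AddCommGroup Y] [Module F Y] (ρX : Representation F G X) (ρY : Representation F G Y)
    (hX : IsIrredRep ρX) (hY : IsIrredRep ρY) (f : X →ₗ[F] Y)
    (hf : ∀ (g : G) (x : X), f (ρX g x) = ρY g (f x)) (hne : f ≠ 0) :
    ∃ e : X ≃ₗ[F] Y, ∀ (g : G) (x : X), e (ρX g x) = ρY g (e x) := by
  have hker : LinearMap.ker f = ⊥ := by
    rcases hX.2 (LinearMap.ker f) (fun g v hv => by
      rw [LinearMap.mem_ker] at hv ⊢
      rw [hf, hv, map_zero]) with h | h
    · exact h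
    · exfalso
      apply hne
      ext x
      have : x ∈ LinearMap.ker f := h ▸ Submodule.mem_top
      simpa using this
  have hrange : LinearMap.range f = ⊤ := by
    rcases hY.2 (LinearMap.range f) (fun g v hv => by
      obtain ⟨x, rfl⟩ := hv
      exact ⟨ρX g x, hf g x⟩) with h | h
    · exfalso
      apply hne
      ext x
      have : f x ∈ LinearMap.range f := ⟨x, rfl⟩
      rw [h] at this
      simpa using this
    · exact h
  exact ⟨LinearEquiv.ofBijective f ⟨LinearMap.ker_eq_bot.mp hker,
    LinearMap.range_eq_top.mp hrange⟩, fun g x => hf g x⟩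

/-- Combined surjectivity onto finitely many pairwise non-isomorphic simple quotients. -/
lemma surj_pieces {F G T X ι : Type*} [Field F] [Monoid G]
    [AddCommGroup T] [Module F T] [AddCommGroup X] [Module F X]
    (ρT : Representation F G T) (ρX : ι → Representation F G X)
    (hsimple : ∀ i, IsIrredRep (ρX i))
    (hhom : ∀ i j, i ≠ j → ∀ f : X →ₗ[F] X,
      (∀ (g : G) (x : X), f (ρX i g x) = ρX j g (f x)) → f = 0)
    (q : ι → T →ₗ[F] X)
    (hq : ∀ i, Function.Surjective (q i))
    (hequiv : ∀ i (g : G) (t : T), q i (ρT g t) = ρX i g (q i t)) :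
    ∀ s : Finset ι, ∀ x : ι → X, ∃ t : T, ∀ i ∈ s, q i t = x i := by
  classical
  intro s
  induction s using Finset.induction_on with
  | empty => intro x; exact ⟨0, by simp⟩
  | @insert a s ha IH =>
    intro x
    set Qs : T →ₗ[F] (s → X) := LinearMap.pi (fun i : s => q i) with hQsdef
    have hQsapp : ∀ (t : T) (i : s), Qs t i = q i t := fun t i => rfl
    have hQs_surj : Function.Surjective Qs := by
      intro y
      obtain ⟨t, ht⟩ := IH (fun i => if h : i ∈ s then y ⟨i, h⟩ else 0)
      refine ⟨t, funext fun i => ?_⟩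
      rw [hQsapp, ht i i.2, dif_pos i.2]
    have hKinv : ∀ (g : G), ∀ t ∈ LinearMap.ker Qs, ρT g t ∈ LinearMap.ker Qs := by
      intro g t ht
      rw [LinearMap.mem_ker] at ht ⊢
      funext i
      have h0 : q i t = 0 := by
        have := congrFun ht i
        simpa [hQsapp] using this
      show Qs (ρT g t) i = 0
      rw [hQsapp, hequiv, h0, map_zero]
    have hLinv : ∀ (g : G), ∀ y ∈ (LinearMap.ker Qs).map (q a), ρX a g y ∈
        (LinearMap.ker Qs).map (q a) := by
      intro g y hy
      obtain ⟨t, ht, rfl⟩ := hy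
      exact ⟨ρT g t, hKinv g t ht, hequiv a g t⟩
    rcases (hsimple a).2 ((LinearMap.ker Qs).map (q a)) hLinv with hL | hL
    · -- contradiction case
      exfalso
      have hKa : LinearMap.ker Qs ≤ LinearMap.ker (q a) := by
        intro t ht
        rw [LinearMap.mem_ker]
        have : q a t ∈ (LinearMap.ker Qs).map (q a) := ⟨t, ht, rfl⟩
        rw [hL] at this
        simpa using this
      set ebar : (T ⧸ LinearMap.ker Qs) →ₗ[F] (s → X) :=
        (LinearMap.ker Qs).liftQ Qs le_rfl with hebar
      have hebar_surj : Function.Surjective ebar := by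
        intro y
        obtain ⟨t, rfl⟩ := hQs_surj y
        exact ⟨(LinearMap.ker Qs).mkQ t, by simp [ebar]⟩
      have hebar_inj : Function.Injective ebar := by
        rw [← LinearMap.ker_eq_bot]
        exact Submodule.ker_liftQ_eq_bot _ _ _ le_rfl
      set e : (T ⧸ LinearMap.ker Qs) ≃ₗ[F] (s → X) :=
        LinearEquiv.ofBijective ebar ⟨hebar_inj, hebar_surj⟩ with he
      set qbar : (T ⧸ LinearMap.ker Qs) →ₗ[F] X :=
        (LinearMap.ker Qs).liftQ (q a) hKa with hqbar
      set ψ : (s → X) →ₗ[F] X := qbar.comp (e.symm : (s → X) →ₗ[F] (T ⧸ LinearMap.ker Qs))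
        with hψdef
      have hψ : ∀ t : T, ψ (Qs t) = q a t := by
        intro t
        have h1 : e.symm (Qs t) = (LinearMap.ker Qs).mkQ t := by
          apply e.injective
          simp [e, ebar]
          rfl
        show qbar (e.symm (Qs t)) = q a t
        rw [h1]
        simp [qbar]
      haveI : Nontrivial X := (hsimple a).1
      have hψne : ψ ≠ 0 := by
        obtain ⟨x0, hx0⟩ := exists_ne (0 : X)
        obtain ⟨t, ht⟩ := hq a x0
        intro h
        apply hx0
        rw [← ht, ← hψ t, h]
        rfl
      have hex : ∃ i : s, ψ.comp (LinearMap.single F (fun _ : s => X) i) ≠ 0 := by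
        by_contra hall
        push_neg at hall
        apply hψne
        apply LinearMap.ext
        intro y
        have hy : y = ∑ i : s, Pi.single i (y i) := (Finset.univ_sum_single y).symm
        rw [hy, map_sum, LinearMap.zero_apply]
        refine Finset.sum_eq_zero fun i _ => ?_
        have := congrFun (congrArg (fun (f : X →ₗ[F] X) => (f : X → X)) (hall i)) (y i)
        simpa using this
      obtain ⟨i, hi⟩ := hex
      have hia : (i : ι) ≠ a := fun h => ha (h ▸ i.2)
      apply hi
      apply hhom i a hia
      intro g x0
      obtain ⟨t, ht⟩ := hQs_surj (Pi.single i x0)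
      have h1 : Qs (ρT g t) = Pi.single i (ρX i g x0) := by
        funext j
        rw [hQsapp, hequiv]
        have hqt : q j t = (Pi.single i x0 : s → X) j := by rw [← hQsapp, ht]
        rw [hqt]
        by_cases hji : j = i
        · subst hji; simp
        · simp [Pi.single_eq_of_ne hji]
      show ψ (Pi.single i (ρX i g x0)) = ρX a g (ψ (Pi.single i x0))
      rw [← h1, hψ, hequiv, ← ht, hψ]
    · -- success case
      obtain ⟨t₀, ht₀⟩ := IH x
      have hmem : x a - q a t₀ ∈ (LinearMap.ker Qs).map (q a) := hL ▸ Submodule.mem_top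
      obtain ⟨kk, hkk, hkk2⟩ := hmem
      refine ⟨t₀ + kk, ?_⟩
      intro i hi
      rcases Finset.mem_insert.mp hi with rfl | hi
      · rw [map_add, hkk2]
        abel
      · have hk0 : q i kk = 0 := by
          have := congrFun (LinearMap.mem_ker.mp hkk) (⟨i, hi⟩ : s)
          simpa [hQsapp] using this
        rw [map_add, hk0, add_zero, ht₀ i hi]

/-- The subrepresentation on an invariant submodule. -/
noncomputable def subRep {k G V : Type*} [Field k] [Monoid G] [AddCommGroup V] [Module k V]
    (ρ : Representation k G V) (W : Submodule k V) (hW : ∀ g : G, ∀ v ∈ W, ρ g v ∈ W) :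
    Representation k G W where
  toFun g := (ρ g).restrict (fun v hv => hW g v hv)
  map_one' := by ext v; simp [LinearMap.restrict_apply]
  map_mul' g h := by ext v; simp [LinearMap.restrict_apply]

lemma subRep_coe {k G V : Type*} [Field k] [Monoid G] [AddCommGroup V] [Module k V]
    (ρ : Representation k G V) (W : Submodule k V) (hW : ∀ g : G, ∀ v ∈ W, ρ g v ∈ W)
    (g : G) (w : W) : (subRep ρ W hW g w : V) = ρ g (w : V) := rfl

/-- Construction of the surjection `ℂ ⊗[E] W → X` from a conjugate datum. -/
lemma exists_q {E E₀ G V X : Type*} [Field E] [Field E₀] [Algebra E E₀]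
    [Algebra E ℂ] [Algebra E₀ ℂ] [IsScalarTower E E₀ ℂ] [Monoid G]
    [AddCommGroup V] [Module E₀ V] [Module E V]
    [IsScalarTower E E₀ V] [AddCommGroup X] [Module ℂ X]
    (ρ₀ : Representation E₀ G V) (σ : E₀ →ₐ[E] ℂ) (ρX : Representation ℂ G X)
    (j : V →ₛₗ[σ.toRingHom] X)
    (hjequiv : ∀ (g : G) (v : V), j (ρ₀ g v) = ρX g (j v))
    (hjspan : Submodule.span ℂ (Set.range j) = ⊤)
    (W : Submodule E V) (hWinv : ∀ g : G, ∀ v ∈ W, (resRep E ρ₀) g v ∈ W)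
    (hWspan : Submodule.span E₀ (W : Set V) = ⊤) :
    ∃ q : (ℂ ⊗[E] W) →ₗ[ℂ] X, Function.Surjective q ∧
      ∀ (g : G) (t : ℂ ⊗[E] W),
        q (repBaseChange ℂ (subRep (resRep E ρ₀) W hWinv) g t) = ρX g (q t) := by
  classical
  letI : Module E X := Module.compHom X (algebraMap E ℂ)
  haveI : IsScalarTower E ℂ X := ⟨fun e c x => by
    show (e • c) • x = algebraMap E ℂ e • (c • x)
    rw [Algebra.smul_def, mul_smul]⟩
  have hsmul : ∀ (e : E) (x : X), e • x = algebraMap E ℂ e • x := fun e x => rfl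
  set f0 : W →ₗ[E] X :=
    { toFun := fun w => j (w : V)
      map_add' := by
        intro a b
        show j ((a + b : W) : V) = j (a : V) + j (b : V)
        rw [Submodule.coe_add, map_add]
      map_smul' := by
        intro e w
        show j ((e • w : W) : V) = e • j (w : V)
        rw [hsmul]
        have h1 : ((e • w : W) : V) = (algebraMap E E₀ e) • (w : V) := by
          rw [Submodule.coe_smul, algebraMap_smul]
        rw [h1, LinearMap.map_smulₛₗ]
        congr 1
        exact σ.commutes e } with hf0
  set q : (ℂ ⊗[E] W) →ₗ[ℂ] X := f0.liftBaseChange ℂ with hq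
  have hqtmul : ∀ (c : ℂ) (w : W), q (c ⊗ₜ[E] w) = c • j (w : V) := by
    intro c w
    rw [hq, LinearMap.liftBaseChange_tmul]
    rfl
  have hrange : ∀ v : V, j v ∈ LinearMap.range q := by
    intro v
    have hv : v ∈ Submodule.span E₀ (W : Set V) := hWspan ▸ Submodule.mem_top
    induction hv using Submodule.span_induction with
    | mem w hw => exact ⟨1 ⊗ₜ ⟨w, hw⟩, by rw [hqtmul, one_smul]⟩
    | zero => rw [map_zero]; exact Submodule.zero_mem _
    | add a b _ _ ha hb => rw [map_add]; exact Submodule.add_mem _ ha hb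
    | smul c v _ hv => rw [LinearMap.map_smulₛₗ]; exact Submodule.smul_mem _ _ hv
  refine ⟨q, ?_, ?_⟩
  · rw [← LinearMap.range_eq_top, eq_top_iff, ← hjspan, Submodule.span_le]
    rintro _ ⟨v, rfl⟩
    exact hrange v
  · intro g t
    induction t using TensorProduct.induction_on with
    | zero => simp
    | tmul c w =>
        rw [repBaseChange_tmul, hqtmul, hqtmul, subRep_coe]
        have : (resRep E ρ₀) g (w : V) = ρ₀ g (w : V) := rfl
        rw [this, hjequiv, map_smul]
    | add a b ha hb => rw [map_add, map_add, map_add, ha, hb, map_add]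

/-- finrank of the span of a semilinear image of a finite-dimensional submodule. -/
lemma finrank_span_semilinear_image_le {k F V Y : Type*} [Field k] [Field F]
    [AddCommGroup V] [Module k V] [AddCommGroup Y] [Module F Y] [FiniteDimensional F Y]
    (σ : k →+* F) (j : V →ₛₗ[σ] Y) (U : Submodule k V) [FiniteDimensional k U] :
    Module.finrank F (Submodule.span F (j '' U)) ≤ Module.finrank k U := by
  classical
  let bU := Module.finBasis k U
  set S : Set V := Set.range (fun i => ((bU i : U) : V)) with hS
  have hspanS : Submodule.span k S = U := by
    have h1 : Submodule.span k (Set.range (fun i => (bU i : U))) = (⊤ : Submodule k U) :=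
      bU.span_eq
    have h2 : Submodule.map U.subtype (Submodule.span k (Set.range fun i => bU i)) =
        Submodule.map U.subtype ⊤ := by rw [h1]
    rw [Submodule.map_span, Submodule.map_top, Submodule.range_subtype] at h2
    rw [hS]
    have h3 : (Set.range fun i => ((bU i : U) : V)) =
        U.subtype '' Set.range fun i => bU i := by
      rw [← Set.range_comp]; rfl
    rw [h3, h2]
  have hsub : ∀ v ∈ (U : Set V), j v ∈ Submodule.span F (j '' S) := by
    intro v hv
    rw [← hspanS] at hv
    induction hv using Submodule.span_induction with
    | mem x hx => exact Submodule.subset_span ⟨x, hx, rfl⟩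
    | zero => rw [map_zero]; exact Submodule.zero_mem _
    | add a b _ _ ha hb => rw [map_add]; exact Submodule.add_mem _ ha hb
    | smul c x _ hx => rw [LinearMap.map_smulₛₗ]; exact Submodule.smul_mem _ _ hx
  have hle : Submodule.span F (j '' U) ≤ Submodule.span F (j '' S) := by
    rw [Submodule.span_le]
    rintro _ ⟨v, hv, rfl⟩
    exact hsub v hv
  have h3 : Submodule.span F (j '' S) = Submodule.span F (Set.range fun i => j (bU i)) := by
    congr 1
    rw [hS]
    ext y
    constructor
    · rintro ⟨_, ⟨i, rfl⟩, rfl⟩; exact ⟨i, rfl⟩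
    · rintro ⟨i, rfl⟩; exact ⟨_, ⟨i, rfl⟩, rfl⟩
  have h4 : Module.finrank F (Submodule.span F (Set.range fun i => j (bU i))) ≤
      Module.finrank k U := by
    have := finrank_span_le_card (R := F) (Set.range fun i => j (bU i))
    refine le_trans this ?_
    rw [Set.toFinset_range]
    refine le_trans (Finset.card_image_le) ?_
    simp
  exact le_trans (Submodule.finrank_mono hle) (h3 ▸ h4)

end AuxiliaryLemmas

/-- let `E ⊆ E₀ ⊆ ℂ` with `E₀/E` finite and `V₀` a finite-dimensional
absolutely irreducible representation of `G` over `E₀`.  If for any two distinct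
`E`-algebra embeddings `σ, τ : E₀ → ℂ` the conjugates `ℂ ⊗_{σ,E₀} V₀` and
`ℂ ⊗_{τ,E₀} V₀` are non-isomorphic as representations of `G` over `ℂ`, then the
restriction of scalars `res_{E₀/E} V₀` is irreducible over `E`. -/
theorem stmt_4 {E E₀ G V₀ : Type*} [Field E] [Field E₀] [Algebra E E₀]
    [Algebra E ℂ] [Algebra E₀ ℂ] [IsScalarTower E E₀ ℂ] [FiniteDimensional E E₀]
    [Group G]
    [AddCommGroup V₀] [Module E₀ V₀] [Module E V₀] [IsScalarTower E E₀ V₀]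
    [FiniteDimensional E₀ V₀]
    (ρ₀ : Representation E₀ G V₀)
    (habs : ∀ (F : Type*) [Field F] [Algebra E₀ F], IsIrredRep (repBaseChange F ρ₀))
    (hconj : ∀ σ τ : E₀ →ₐ[E] ℂ, σ ≠ τ →
      ∀ (W W' : Type) [AddCommGroup W] [Module ℂ W] [AddCommGroup W'] [Module ℂ W']
        (ρW : Representation ℂ G W) (ρW' : Representation ℂ G W'),
        IsConjugateRep σ.toRingHom ρ₀ ρW → IsConjugateRep τ.toRingHom ρ₀ ρW' →
        ¬∃ f : W ≃ₗ[ℂ] W', ∀ (g : G) (w : W), f (ρW g w) = ρW' g (f w)) :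
    IsIrredRep (resRep E ρ₀) := by
  classical
  haveI hCZ : CharZero E := RingHom.charZero (algebraMap E ℂ)
  have hcard : Fintype.card (E₀ →ₐ[E] ℂ) = Module.finrank E E₀ := AlgHom.card E E₀ ℂ
  set m := Module.finrank E₀ V₀ with hm
  have hX : Module.finrank ℂ (Fin m → ℂ) = Module.finrank E₀ V₀ := Module.finrank_fin_fun ℂ
  -- conjugate models for each embedding
  have key : ∀ σ : E₀ →ₐ[E] ℂ, ∃ ρX : Representation ℂ G (Fin m → ℂ),
      ∃ j : V₀ →ₛₗ[σ.toRingHom] (Fin m → ℂ), Function.Injective j ∧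
        (∀ (g : G) (v : V₀), j (ρ₀ g v) = ρX g (j v)) ∧
        Submodule.span ℂ (Set.range j) = ⊤ ∧ IsIrredRep ρX := by
    intro σ
    letI : Algebra E₀ (ULift ℂ) :=
      ((ULift.ringEquiv (R := ℂ)).symm.toRingHom.comp σ.toRingHom).toAlgebra
    have h1 := habs (ULift ℂ)
    have h2 := conjModel (ULift.ringEquiv (R := ℂ)) ρ₀ h1
    have h3 : ((ULift.ringEquiv (R := ℂ)) : ULift ℂ →+* ℂ).comp (algebraMap E₀ (ULift ℂ)) =
        σ.toRingHom := by
      ext x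
      rfl
    rw [h3] at h2
    exact h2
  choose ρX jmap hjinj hjeq hjspan hirr using key
  -- nonempty set of embeddings
  have hne : Nonempty (E₀ →ₐ[E] ℂ) := by
    rw [← Fintype.card_pos_iff, hcard]
    exact Module.finrank_pos
  obtain ⟨σ₀⟩ := hne
  -- V₀ is nontrivial
  haveI hnt : Nontrivial V₀ := by
    by_contra h
    rw [not_nontrivial_iff_subsingleton] at h
    have htb : (⊤ : Submodule ℂ (Fin m → ℂ)) = ⊥ := by
      rw [← hjspan σ₀, eq_bot_iff, Submodule.span_le]
      rintro _ ⟨v, rfl⟩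
      have hv0 : v = 0 := Subsingleton.elim v 0
      simp [hv0]
      exact (jmap σ₀).map_zero
    obtain ⟨x, y, hxy⟩ := (hirr σ₀).1
    apply hxy
    have hx : x ∈ (⊥ : Submodule ℂ (Fin m → ℂ)) := htb ▸ Submodule.mem_top
    have hy : y ∈ (⊥ : Submodule ℂ (Fin m → ℂ)) := htb ▸ Submodule.mem_top
    rw [Submodule.mem_bot] at hx hy
    rw [hx, hy]
  -- ρ₀ itself is irreducible
  have hρ₀irr : ∀ U : Submodule E₀ V₀, (∀ g : G, ∀ v ∈ U, ρ₀ g v ∈ U) → U = ⊥ ∨ U = ⊤ := by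
    intro U hUinv
    by_cases hUbot : U = ⊥
    · exact Or.inl hUbot
    refine Or.inr ?_
    have hYinv : ∀ g : G, ∀ y ∈ Submodule.span ℂ (jmap σ₀ '' U), ρX σ₀ g y ∈
        Submodule.span ℂ (jmap σ₀ '' U) := by
      intro g y hy
      induction hy using Submodule.span_induction with
      | mem x hx =>
          obtain ⟨u, hu, rfl⟩ := hx
          rw [← hjeq]
          exact Submodule.subset_span ⟨ρ₀ g u, hUinv g u hu, rfl⟩
      | zero => rw [map_zero]; exact Submodule.zero_mem _
      | add a b _ _ ha hb => rw [map_add]; exact Submodule.add_mem _ ha hb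
      | smul c x _ hx => rw [map_smul]; exact Submodule.smul_mem _ _ hx
    have hYbot : Submodule.span ℂ (jmap σ₀ '' U) ≠ ⊥ := by
      obtain ⟨u, hu, hune⟩ := (Submodule.ne_bot_iff U).mp hUbot
      intro h
      have hmem : jmap σ₀ u ∈ Submodule.span ℂ (jmap σ₀ '' U) :=
        Submodule.subset_span ⟨u, hu, rfl⟩
      rw [h, Submodule.mem_bot] at hmem
      exact hune (hjinj σ₀ (by rw [hmem, map_zero]))
    rcases (hirr σ₀).2 _ hYinv with h | h
    · exact absurd h hYbot
    · have h5 := finrank_span_semilinear_image_le σ₀.toRingHom (jmap σ₀) U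
      rw [h, finrank_top, hX] at h5
      exact Submodule.eq_top_of_finrank_eq (le_antisymm (Submodule.finrank_le U) h5)
  refine ⟨hnt, ?_⟩
  intro W hWinv
  by_cases hWbot : W = ⊥
  · exact Or.inl hWbot
  refine Or.inr ?_
  -- the E₀-span of W is everything
  have hWspan : Submodule.span E₀ (W : Set V₀) = ⊤ := by
    have hinv : ∀ g : G, ∀ v ∈ Submodule.span E₀ (W : Set V₀),
        ρ₀ g v ∈ Submodule.span E₀ (W : Set V₀) := by
      intro g v hv
      induction hv using Submodule.span_induction with
      | mem x hx => exact Submodule.subset_span (hWinv g x hx)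
      | zero => rw [map_zero]; exact Submodule.zero_mem _
      | add a b _ _ ha hb => rw [map_add]; exact Submodule.add_mem _ ha hb
      | smul c x _ hx => rw [map_smul]; exact Submodule.smul_mem _ _ hx
    rcases hρ₀irr _ hinv with h | h
    · exfalso
      obtain ⟨w, hw, hwne⟩ := (Submodule.ne_bot_iff W).mp hWbot
      have : w ∈ Submodule.span E₀ (W : Set V₀) := Submodule.subset_span hw
      rw [h, Submodule.mem_bot] at this
      exact hwne this
    · exact h
  -- surjections onto the conjugate models
  have hq := fun σ : E₀ →ₐ[E] ℂ =>
    exists_q ρ₀ σ (ρX σ) (jmap σ) (hjeq σ) (hjspan σ) W hWinv hWspan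
  choose q hqsurj hqequiv using hq
  -- pairwise no nonzero homs
  have hhom : ∀ σ τ : E₀ →ₐ[E] ℂ, σ ≠ τ → ∀ f : (Fin m → ℂ) →ₗ[ℂ] (Fin m → ℂ),
      (∀ (g : G) (x : Fin m → ℂ), f (ρX σ g x) = ρX τ g (f x)) → f = 0 := by
    intro σ τ hστ f hf
    by_contra hfne
    obtain ⟨e, he⟩ := schur_iso (ρX σ) (ρX τ) (hirr σ) (hirr τ) f hf hfne
    exact hconj σ τ hστ (Fin m → ℂ) (Fin m → ℂ) (ρX σ) (ρX τ)
      ⟨jmap σ, hjeq σ, hjspan σ, hX⟩ ⟨jmap τ, hjeq τ, hjspan τ, hX⟩ ⟨e, he⟩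
  -- combined surjectivity
  have hsurj := surj_pieces (repBaseChange ℂ (subRep (resRep E ρ₀) W hWinv)) ρX hirr hhom
    q hqsurj hqequiv Finset.univ
  set Q : (ℂ ⊗[E] ↥W) →ₗ[ℂ] ((E₀ →ₐ[E] ℂ) → (Fin m → ℂ)) := LinearMap.pi q with hQ
  have hQsurj : Function.Surjective Q := by
    intro y
    obtain ⟨t, ht⟩ := hsurj y
    exact ⟨t, funext fun σ => ht σ (Finset.mem_univ σ)⟩
  -- dimension count
  haveI : FiniteDimensional E V₀ := Module.Finite.trans E₀ V₀
  haveI : FiniteDimensional ℂ (ℂ ⊗[E] ↥W) := Module.Finite.base_change E ℂ ↥W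
  have hTrank : Module.finrank ℂ (ℂ ⊗[E] ↥W) = Module.finrank E ↥W :=
    Module.finrank_baseChange
  have h6 : Module.finrank ℂ ((E₀ →ₐ[E] ℂ) → (Fin m → ℂ)) ≤
      Module.finrank ℂ (ℂ ⊗[E] ↥W) := by
    have h7 := LinearMap.finrank_range_le Q
    rwa [LinearMap.range_eq_top.mpr hQsurj, finrank_top] at h7
  have h8 : Module.finrank ℂ ((E₀ →ₐ[E] ℂ) → (Fin m → ℂ)) =
      Fintype.card (E₀ →ₐ[E] ℂ) * m := by
    rw [Module.finrank_pi_fintype]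
    simp [hX]
    exact Or.inl hm.symm
  have h9 : Module.finrank E V₀ ≤ Module.finrank E ↥W := by
    calc Module.finrank E V₀ = Module.finrank E E₀ * Module.finrank E₀ V₀ :=
          (Module.finrank_mul_finrank E E₀ V₀).symm
      _ = Fintype.card (E₀ →ₐ[E] ℂ) * m := by rw [hcard, hm]
      _ = Module.finrank ℂ ((E₀ →ₐ[E] ℂ) → (Fin m → ℂ)) := h8.symm
      _ ≤ Module.finrank ℂ (ℂ ⊗[E] ↥W) := h6
      _ = Module.finrank E ↥W := hTrank
  exact Submodule.eq_top_of_finrank_eq (le_antisymm (Submodule.finrank_le W) h9)
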